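/- For every rational c ∉ {0, 4}, the coordinates (σ₁, σ₂) of the fixed-point multipliers of ψ_c(x) = (2x−1)/(cx²−1) are (−6, 12); in particular (σ₁, σ₂) satisfies the symmetry-locus equation −2r³ − r²s + r² + 8rs + 4s² − 12r − 12s + 36 = 0, so Aut(ψ_c) is nontrivial. -/

import Mathlib

noncomputable section
open scoped Classical
open Polynomial

/-- The Möbius transformation `x ↦ (ax + b)/(ex + d)` on `ℙ¹(K) = K ∪ {∞}`. -/
def mobius {K : Type*} [Field K] (a b e d : K) : Option K → Option K
  | none => if e = 0 then none else some (a/e)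
  | some x => if e*x + d = 0 then none else some ((a*x + b)/(e*x + d))

/-- The map `ψ_c(x) = (2x − 1)/(cx² − 1)` on `ℙ¹(K)`; `ψ_c(∞) = 0`. -/
def psiOpt {K : Type*} [Field K] (c : K) : Option K → Option K
  | none => some 0
  | some x => if c*x^2 - 1 = 0 then none else some ((2*x - 1)/(c*x^2 - 1))

lemma mult_eq_neg_two {K : Type*} [Field K] (c r : K) (hc4 : c ≠ 4)
    (hroot : c*r^3 - 3*r + 1 = 0) :
    (-2*c*r^2 + 2*c*r - 2)/((c*r^2 - 1)^2) = -2 := by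
  have hden : c*r^2 - 1 ≠ 0 := by
    intro h
    have h21 : 2*r - 1 = 0 := by linear_combination (-1)*hroot + r*h
    exact hc4 (by linear_combination 4*h - c*(2*r+1)*h21)
  rw [div_eq_iff (pow_ne_zero 2 hden)]
  linear_combination (2*c*r)*hroot

lemma aut_general {K : Type*} [Field K] (c a b e d k : K)
    (hc0 : c ≠ 0) (hc4 : c ≠ 4) (hk : k ≠ 0) (ha : a ≠ 0) (he : e ≠ 0)
    (hdet : a*d - b*e ≠ 0)
    (hA : ∀ x : K, c*(a*x+b)^2 - (e*x+d)^2 = k*(e*(2*x-1) + d*(c*x^2-1)))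
    (hB : ∀ x : K, 2*(a*x+b)*(e*x+d) - (e*x+d)^2 = k*(a*(2*x-1) + b*(c*x^2-1)))
    (hE1 : c*a^2 - e^2 = k*d*c)
    (hE2 : 2*a*e - e^2 = k*b*c) :
    (psiOpt c) ∘ (mobius a b e d) = (mobius a b e d) ∘ (psiOpt c) := by
  funext z
  cases z with
  | none =>
    simp only [Function.comp_apply, mobius, psiOpt, if_neg he]
    have hcond : c*(a/e)^2 - 1 = k*d*c/e^2 := by
      field_simp
      linear_combination hE1
    rw [hcond]
    by_cases hd : d = 0
    · simp [hd]
    · have h1 : k*d*c/e^2 ≠ 0 :=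
        div_ne_zero (mul_ne_zero (mul_ne_zero hk hd) hc0) (pow_ne_zero 2 he)
      have h2 : e*0 + d ≠ 0 := by simpa using hd
      rw [if_neg h1, if_neg h2]
      congr 1
      rw [div_eq_div_iff h1 h2]
      field_simp
      linear_combination d*hE2
  | some x =>
    simp only [Function.comp_apply]
    by_cases hm : e*x + d = 0
    · have hmx : mobius a b e d (some x) = none := by
        simp only [mobius, if_pos hm]
      rw [hmx]
      have hn : a*(2*x-1) + b*(c*x^2-1) = 0 := by
        have h' : k*(a*(2*x-1) + b*(c*x^2-1)) = 0 := by
          linear_combination (-1)*(hB x) + (2*(a*x+b) - (e*x+d))*hm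
        exact (mul_eq_zero.mp h').resolve_left hk
      have hp : c*x^2 - 1 ≠ 0 := by
        intro hp0
        have h21 : 2*x - 1 = 0 := by
          have h'' : a*(2*x-1) = 0 := by linear_combination hn - b*hp0
          exact (mul_eq_zero.mp h'').resolve_left ha
        exact hc4 (by linear_combination 4*hp0 - c*(2*x+1)*h21)
      have hpsix : psiOpt c (some x) = some ((2*x-1)/(c*x^2-1)) := by
        simp only [psiOpt, if_neg hp]
      rw [hpsix]
      have hr : e*(2*x-1) + d*(c*x^2-1) ≠ 0 := by
        intro hr0
        have h1 : c*(a*x+b)^2 = 0 := by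
          linear_combination (hA x) + k*hr0 + (e*x+d)*hm
        have h2 : a*x + b = 0 :=
          pow_eq_zero_iff two_ne_zero |>.mp ((mul_eq_zero.mp h1).resolve_left hc0)
        exact hdet (by linear_combination a*hm - e*h2)
      have hden : e*((2*x-1)/(c*x^2-1)) + d ≠ 0 := by
        intro h0
        apply hr
        rw [mul_div_assoc', div_add' _ _ _ hp, div_eq_iff hp, zero_mul] at h0
        linear_combination h0
      have hnum : a*((2*x-1)/(c*x^2-1)) + b = 0 := by
        have h1 : a*((2*x-1)/(c*x^2-1)) + b
            = (a*(2*x-1) + b*(c*x^2-1))/(c*x^2-1) := by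
          rw [mul_div_assoc', div_add' _ _ _ hp]
        rw [h1, hn, zero_div]
      simp only [psiOpt, mobius, if_neg hden, hnum, zero_div]
    · have hmob : mobius a b e d (some x) = some ((a*x+b)/(e*x+d)) := by
        simp only [mobius, if_neg hm]
      rw [hmob]
      have hq : c*((a*x+b)/(e*x+d))^2 - 1
          = k*(e*(2*x-1) + d*(c*x^2-1))/(e*x+d)^2 := by
        rw [div_pow, mul_div_assoc', div_sub' (pow_ne_zero 2 hm), mul_one]; congr 1
        linear_combination hA x
      by_cases hr : e*(2*x-1) + d*(c*x^2-1) = 0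
      · have hp : c*x^2 - 1 ≠ 0 := by
          intro hp0
          have h21 : 2*x - 1 = 0 := by
            have h'' : e*(2*x-1) = 0 := by linear_combination hr - d*hp0
            exact (mul_eq_zero.mp h'').resolve_left he
          exact hc4 (by linear_combination 4*hp0 - c*(2*x+1)*h21)
        have hpsix : psiOpt c (some x) = some ((2*x-1)/(c*x^2-1)) := by
          simp only [psiOpt, if_neg hp]
        rw [hpsix]
        have hL : c*((a*x+b)/(e*x+d))^2 - 1 = 0 := by rw [hq, hr]; simp
        have hden0 : e*((2*x-1)/(c*x^2-1)) + d = 0 := by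
          have h1 : e*((2*x-1)/(c*x^2-1)) + d
              = (e*(2*x-1) + d*(c*x^2-1))/(c*x^2-1) := by
            rw [mul_div_assoc', div_add' _ _ _ hp]
          rw [h1, hr, zero_div]
        simp only [psiOpt, mobius, if_pos hL, if_pos hden0]
      · have hLne : c*((a*x+b)/(e*x+d))^2 - 1 ≠ 0 := by
          rw [hq]
          exact div_ne_zero (mul_ne_zero hk hr) (pow_ne_zero _ hm)
        have hval : (2*((a*x+b)/(e*x+d)) - 1) / (c*((a*x+b)/(e*x+d))^2 - 1)
            = (a*(2*x-1) + b*(c*x^2-1)) / (e*(2*x-1) + d*(c*x^2-1)) := by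
          have hcross : (2*(a*x+b) - (e*x+d)) * (e*x+d)
              = (a*(2*x-1) + b*(c*x^2-1)) * k := by
            linear_combination hB x
          have h2g : 2*((a*x+b)/(e*x+d)) - 1
              = (2*(a*x+b) - (e*x+d))/(e*x+d) := by rw [mul_div_assoc', div_sub' hm, mul_one]
          have hm2 : (e*x+d)/(e*x+d)^2 = 1/(e*x+d) := by
            rw [pow_two]
            field_simp
          rw [hq, h2g, div_div_div_comm, hm2, div_div, mul_one_div, div_div_eq_mul_div,
            div_eq_div_iff (mul_ne_zero hk hr) hr]
          linear_combination (e*(2*x-1) + d*(c*x^2-1))*hcross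
        by_cases hp : c*x^2 - 1 = 0
        · have hpsix : psiOpt c (some x) = none := by
            simp only [psiOpt, if_pos hp]
          rw [hpsix]
          have h21 : 2*x - 1 ≠ 0 := by
            intro h
            exact hc4 (by linear_combination 4*hp - c*(2*x+1)*h)
          have hfin : psiOpt c (some ((a*x+b)/(e*x+d)))
              = some ((2*((a*x+b)/(e*x+d)) - 1) / (c*((a*x+b)/(e*x+d))^2 - 1)) := by
            simp only [psiOpt, if_neg hLne]
          rw [hfin, hval]
          have hmobnone : mobius a b e d none = some (a/e) := by
            simp only [mobius, if_neg he]
          rw [hmobnone]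
          congr 1
          have hn' : a*(2*x-1) + b*(c*x^2-1) = a*(2*x-1) := by rw [hp]; ring
          have hr' : e*(2*x-1) + d*(c*x^2-1) = e*(2*x-1) := by rw [hp]; ring
          rw [hn', hr', mul_comm a _, mul_comm e _, mul_div_mul_left _ _ h21]
        · have hpsix : psiOpt c (some x) = some ((2*x-1)/(c*x^2-1)) := by
            simp only [psiOpt, if_neg hp]
          rw [hpsix]
          have hfin : psiOpt c (some ((a*x+b)/(e*x+d)))
              = some ((2*((a*x+b)/(e*x+d)) - 1) / (c*((a*x+b)/(e*x+d))^2 - 1)) := by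
            simp only [psiOpt, if_neg hLne]
          rw [hfin, hval]
          have hden : e*((2*x-1)/(c*x^2-1)) + d ≠ 0 := by
            intro h0
            apply hr
            rw [mul_div_assoc', div_add' _ _ _ hp, div_eq_iff hp, zero_mul] at h0
            linear_combination h0
          have hmobfin : mobius a b e d (some ((2*x-1)/(c*x^2-1)))
              = some ((a*((2*x-1)/(c*x^2-1)) + b)/(e*((2*x-1)/(c*x^2-1)) + d)) := by
            simp only [mobius, if_neg hden]
          rw [hmobfin]
          congr 1
          have h1 : a*((2*x-1)/(c*x^2-1)) + b
              = (a*(2*x-1) + b*(c*x^2-1))/(c*x^2-1) := by rw [mul_div_assoc', div_add' _ _ _ hp]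
          have h2 : e*((2*x-1)/(c*x^2-1)) + d
              = (e*(2*x-1) + d*(c*x^2-1))/(c*x^2-1) := by rw [mul_div_assoc', div_add' _ _ _ hp]
          rw [h1, h2, div_div_div_comm, div_self hp, div_one]

lemma aut_concrete {K : Type*} [Field K] [CharZero K] (c s : K)
    (hc0 : c ≠ 0) (hc4 : c ≠ 4) (hs : s^2 = 12*c - 3*c^2) (hsne : s ≠ c + 2) :
    ∃ a b e d : K, a*d - b*e ≠ 0 ∧
      mobius a b e d ≠ (id : Option K → Option K) ∧
      (psiOpt c) ∘ (mobius a b e d) = (mobius a b e d) ∘ (psiOpt c) := by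
  have hsc2 : s - c - 2 ≠ 0 := by
    intro h; exact hsne (by linear_combination h)
  have ha : c*(s-c-2) ≠ 0 := mul_ne_zero hc0 hsc2
  have he : c*(s-3*c) ≠ 0 := by
    refine mul_ne_zero hc0 ?_
    intro h3'
    have h3 : s = 3*c := by linear_combination h3'
    have h12 : (12:K)*c*(c-1) = 0 := by linear_combination hs - (s+3*c)*h3
    have hc1 : c = 1 := by
      rcases mul_eq_zero.mp h12 with h | h
      · rcases mul_eq_zero.mp h with h' | h'
        · exact absurd h' (by norm_num)
        · exact absurd h' hc0
      · linear_combination h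
    exact hsne (by linear_combination h3 + 2*hc1)
  have hk : -(c*(s+c-4)) ≠ 0 := by
    refine neg_ne_zero.mpr (mul_ne_zero hc0 ?_)
    intro h4
    have hfac : (4:K)*((c-1)*(c-4)) = 0 := by linear_combination hs - (s+4-c)*h4
    rcases mul_eq_zero.mp hfac with h | h
    · exact absurd h (by norm_num)
    · rcases mul_eq_zero.mp h with h' | h'
      · have hc1 : c = 1 := by linear_combination h'
        exact hsne (by linear_combination h4 - 2*hc1)
      · exact hc4 (by linear_combination h')
  have hdetEq : (c*(s-c-2))*(2*c*(c-1)) - (3*c-s)*(c*(s-3*c))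
      = 2*c^2*(c-4)*(s-c-2) := by linear_combination c*hs
  refine ⟨c*(s-c-2), 3*c - s, c*(s-3*c), 2*c*(c-1), ?_, ?_, ?_⟩
  · rw [hdetEq]
    exact mul_ne_zero (mul_ne_zero (mul_ne_zero two_ne_zero (pow_ne_zero 2 hc0))
      (sub_ne_zero_of_ne hc4)) hsc2
  · intro hid
    have h' := congrFun hid none
    simp only [mobius, if_neg he, id_eq] at h'
    cases h'
  · refine aut_general c _ _ _ _ (-(c*(s+c-4))) hc0 hc4 hk ha he (hdetEq ▸
      mul_ne_zero (mul_ne_zero (mul_ne_zero two_ne_zero (pow_ne_zero 2 hc0))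
        (sub_ne_zero_of_ne hc4)) hsc2) ?_ ?_ ?_ ?_
    · intro x
      linear_combination (c - c^2 - c^2*x^2 + c^3*x^2)*hs
    · intro x
      linear_combination (c - c^2 - 2*x*c + 2*x*c^2)*hs
    · linear_combination (c^3 - c^2)*hs
    · ring

/-- For `c ∈ ℚ \ {0,4}`, the fixed points of `ψ_c(x) = (2x−1)/(cx²−1)` are the roots of
`cx³ − 3x + 1`, the multiplier at a fixed point `r` is `ψ_c'(r)`, and the elementary
symmetric functions of the three multipliers are `(σ₁, σ₂) = (−6, 12)`; this point
satisfies the symmetry-locus equation, and `Aut(ψ_c)` is nontrivial over `ℚ̄`. -/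
theorem stmt_14 (c : ℚ) (hc0 : c ≠ 0) (hc4 : c ≠ 4)
    (r₁ r₂ r₃ : AlgebraicClosure ℚ)
    (hfactor : (C (c : AlgebraicClosure ℚ) * X^3 - 3*X + 1 : (AlgebraicClosure ℚ)[X]) =
      C (c : AlgebraicClosure ℚ) * ((X - C r₁) * (X - C r₂) * (X - C r₃)))
    (l₁ l₂ l₃ : AlgebraicClosure ℚ)
    (hl₁ : l₁ = (-2*(c : AlgebraicClosure ℚ)*r₁^2 + 2*c*r₁ - 2)/((c : AlgebraicClosure ℚ)*r₁^2 - 1)^2)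
    (hl₂ : l₂ = (-2*(c : AlgebraicClosure ℚ)*r₂^2 + 2*c*r₂ - 2)/((c : AlgebraicClosure ℚ)*r₂^2 - 1)^2)
    (hl₃ : l₃ = (-2*(c : AlgebraicClosure ℚ)*r₃^2 + 2*c*r₃ - 2)/((c : AlgebraicClosure ℚ)*r₃^2 - 1)^2) :
    l₁ + l₂ + l₃ = -6 ∧
    l₁*l₂ + l₁*l₃ + l₂*l₃ = 12 ∧
    -2*(-6 : ℚ)^3 - (-6 : ℚ)^2*12 + (-6 : ℚ)^2 + 8*(-6)*12 + 4*(12 : ℚ)^2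
      - 12*(-6 : ℚ) - 12*(12 : ℚ) + 36 = 0 ∧
    ∃ a b e d : AlgebraicClosure ℚ, a*d - b*e ≠ 0 ∧
      mobius a b e d ≠ (id : Option (AlgebraicClosure ℚ) → Option (AlgebraicClosure ℚ)) ∧
      (psiOpt (c : AlgebraicClosure ℚ)) ∘ (mobius a b e d) =
        (mobius a b e d) ∘ (psiOpt (c : AlgebraicClosure ℚ)) := by
  have hc0K : (c : AlgebraicClosure ℚ) ≠ 0 := Rat.cast_ne_zero.mpr hc0
  have hc4K : (c : AlgebraicClosure ℚ) ≠ 4 := by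
    intro h
    exact hc4 (by exact_mod_cast h)
  have h₁ : (c : AlgebraicClosure ℚ)*r₁^3 - 3*r₁ + 1 = 0 := by
    have h := congrArg (Polynomial.eval r₁) hfactor
    simp only [eval_mul, eval_sub, eval_add, eval_pow, eval_C, eval_X, eval_one,
      eval_ofNat, sub_self, zero_mul, mul_zero] at h
    linear_combination h
  have h₂ : (c : AlgebraicClosure ℚ)*r₂^3 - 3*r₂ + 1 = 0 := by
    have h := congrArg (Polynomial.eval r₂) hfactor
    simp only [eval_mul, eval_sub, eval_add, eval_pow, eval_C, eval_X, eval_one,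
      eval_ofNat, sub_self, zero_mul, mul_zero] at h
    linear_combination h
  have h₃ : (c : AlgebraicClosure ℚ)*r₃^3 - 3*r₃ + 1 = 0 := by
    have h := congrArg (Polynomial.eval r₃) hfactor
    simp only [eval_mul, eval_sub, eval_add, eval_pow, eval_C, eval_X, eval_one,
      eval_ofNat, sub_self, zero_mul, mul_zero] at h
    linear_combination h
  have hL₁ : l₁ = -2 := by rw [hl₁]; exact mult_eq_neg_two _ _ hc4K h₁
  have hL₂ : l₂ = -2 := by rw [hl₂]; exact mult_eq_neg_two _ _ hc4K h₂
  have hL₃ : l₃ = -2 := by rw [hl₃]; exact mult_eq_neg_two _ _ hc4K h₃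
  refine ⟨by rw [hL₁, hL₂, hL₃]; norm_num, by rw [hL₁, hL₂, hL₃]; norm_num,
    by norm_num, ?_⟩
  obtain ⟨s, hs⟩ := IsAlgClosed.exists_pow_nat_eq (12*(c:AlgebraicClosure ℚ) - 3*(c:AlgebraicClosure ℚ)^2) (n := 2)
    (by norm_num)
  by_cases hsne : s = (c:AlgebraicClosure ℚ) + 2
  · -- use -s
    refine aut_concrete (c:AlgebraicClosure ℚ) (-s) hc0K hc4K (by linear_combination hs) ?_
    intro h
    have hc2 : (c:AlgebraicClosure ℚ) + 2 = 0 := by linear_combination (-1/2)*hsne + (-1/2)*h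
    have hs0 : s = 0 := by linear_combination hsne + hc2
    have h36 : (36:AlgebraicClosure ℚ) = 0 := by linear_combination hs - s*hs0 - 3*((c:AlgebraicClosure ℚ)-6)*hc2
    exact absurd h36 (by norm_num)
  · exact aut_concrete (c:AlgebraicClosure ℚ) s hc0K hc4K hs hsne


end
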